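/- arXiv:1801.02759 — 3 statements merged into one kernel-verified Lean document; each statement's English description precedes it below -/
import Mathlib

section
/- Let Θ be proper, lower semi-continuous and p-convex (p ≥ 2, constant c₀ > 0) on a reflexive Banach space X. Then the conjugate Θ* has full domain X*, is Fréchet differentiable, and its gradient satisfies ‖∇Θ*(ξ₁) − ∇Θ*(ξ₂)‖ ≤ (‖ξ₁ − ξ₂‖/(2c₀))^{1/(p−1)} for all ξ₁, ξ₂ ∈ X*. -/
open NormedSpace

/-- Fenchel conjugate of an extended-real-valued function on a normed space. -/
noncomputable def fenchelConj {X : Type*} [NormedAddCommGroup X] [NormedSpace ℝ X]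
    (Θ : X → EReal) (ξ : StrongDual ℝ X) : EReal :=
  ⨆ z : X, (((ξ z : ℝ) : EReal) - Θ z)

set_option maxHeartbeats 2000000 in
/-- Let `Θ` be proper, lower semi-continuous and `p`-convex (`p ≥ 2`, constant `c₀ > 0`)
on a reflexive Banach space `X`. Then the conjugate `Θ*` has full domain `X*`, is Fréchet
differentiable, and its gradient `∇Θ* : X* → X` satisfies
`‖∇Θ*(ξ₁) - ∇Θ*(ξ₂)‖ ≤ (‖ξ₁ - ξ₂‖/(2c₀))^(1/(p-1))` for all `ξ₁, ξ₂ ∈ X*`. -/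
theorem conj_full_domain_diff_grad_holder {X : Type*} [NormedAddCommGroup X]
    [NormedSpace ℝ X] [CompleteSpace X]
    (hrefl : Function.Surjective (inclusionInDoubleDual ℝ X))
    (Θ : X → EReal) (p c₀ : ℝ) (hp : 2 ≤ p) (hc₀ : 0 < c₀)
    (hproper : ∃ z, Θ z ≠ ⊤) (hbot : ∀ z, Θ z ≠ ⊥)
    (hlsc : LowerSemicontinuous Θ)
    (hpconv : ∀ x xb : X, ∀ γ : ℝ, 0 ≤ γ → γ ≤ 1 →
      Θ (γ • xb + (1 - γ) • x) + ((c₀ * γ * (1 - γ) * ‖xb - x‖ ^ p : ℝ) : EReal)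
        ≤ (γ : EReal) * Θ xb + ((1 - γ : ℝ) : EReal) * Θ x) :
    (∀ ξ : StrongDual ℝ X, fenchelConj Θ ξ ≠ ⊤ ∧ fenchelConj Θ ξ ≠ ⊥) ∧
    ∃ G : StrongDual ℝ X → X,
      (∀ ξ : StrongDual ℝ X,
        HasFDerivAt (fun η : StrongDual ℝ X => (fenchelConj Θ η).toReal)
          (inclusionInDoubleDual ℝ X (G ξ)) ξ) ∧
      (∀ ξ₁ ξ₂ : StrongDual ℝ X,
        ‖G ξ₁ - G ξ₂‖ ≤ (‖ξ₁ - ξ₂‖ / (2 * c₀)) ^ (1 / (p - 1))) := by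
  classical
  obtain ⟨z₀, hz₀top⟩ := hproper
  set t₀ := (Θ z₀).toReal with ht₀
  have hz₀ : Θ z₀ = (t₀ : EReal) := (EReal.coe_toReal hz₀top (hbot z₀)).symm
  -- Extract a real inequality from the p-convexity hypothesis.
  have key : ∀ (x xb : X) (s r γ : ℝ), Θ x = (s : EReal) → Θ xb = (r : EReal) → 0 ≤ γ → γ ≤ 1 →
      ∃ t : ℝ, Θ (γ • xb + (1 - γ) • x) = (t : EReal) ∧
        t + c₀ * γ * (1 - γ) * ‖xb - x‖ ^ p ≤ γ * r + (1 - γ) * s := by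
    intro x xb s r γ hs hr h0 h1
    have h := hpconv x xb γ h0 h1
    rw [hr, hs] at h
    have hrhs : (γ : EReal) * (r : EReal) + ((1 - γ : ℝ) : EReal) * (s : EReal)
        = ((γ * r + (1 - γ) * s : ℝ) : EReal) := by
      rw [← EReal.coe_mul, ← EReal.coe_mul, ← EReal.coe_add]
    rw [hrhs] at h
    have hne : Θ (γ • xb + (1 - γ) • x) ≠ ⊤ := by
      intro htop
      rw [htop, EReal.top_add_coe] at h
      exact EReal.coe_ne_top _ (top_le_iff.mp h)
    refine ⟨(Θ (γ • xb + (1 - γ) • x)).toReal, (EReal.coe_toReal hne (hbot _)).symm, ?_⟩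
    rw [← EReal.coe_toReal hne (hbot _), ← EReal.coe_add] at h
    exact_mod_cast h
  -- Lower semicontinuity at z₀ gives a uniform lower bound near z₀.
  obtain ⟨δ, hδ, hball⟩ : ∃ δ > 0, ∀ x : X, ‖x - z₀‖ < δ → ((t₀ - 1 : ℝ) : EReal) < Θ x := by
    have hlt : ((t₀ - 1 : ℝ) : EReal) < Θ z₀ := by
      rw [hz₀]; exact_mod_cast sub_one_lt t₀
    have := hlsc z₀ _ hlt
    rw [Metric.eventually_nhds_iff] at this
    obtain ⟨ε, hε, hε'⟩ := this
    exact ⟨ε, hε, fun x hx => hε' (by rwa [dist_eq_norm])⟩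
  -- Coercivity: a quadratic lower bound away from z₀.
  set m₁ : ℝ := min δ 1 with hm₁def
  have hm₁ : 0 < m₁ := lt_min hδ one_pos
  set a : ℝ := c₀ / 2 * m₁ ^ (p - 2) with hadef
  have ha : 0 < a := by positivity
  have coer : ∀ (x : X) (r : ℝ), Θ x = (r : EReal) → δ ≤ ‖x - z₀‖ →
      t₀ - 2 / δ * ‖x - z₀‖ + a * ‖x - z₀‖ ^ (2 : ℕ) ≤ r := by
    intro x r hx hR
    set R := ‖x - z₀‖ with hRdef
    have hR0 : 0 < R := lt_of_lt_of_le hδ hR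
    set γ : ℝ := δ / (2 * R) with hγdef
    have hγ0 : 0 < γ := by positivity
    have hγhalf : γ ≤ 1 / 2 := by
      rw [hγdef, div_le_div_iff₀ (by positivity) (by norm_num)]
      linarith
    obtain ⟨t, htw, hineq⟩ := key z₀ x t₀ r γ hz₀ hx hγ0.le (by linarith)
    -- the intermediate point is within distance δ/2 < δ of z₀
    have hwz : γ • x + (1 - γ) • z₀ - z₀ = γ • (x - z₀) := by
      rw [sub_smul, one_smul, smul_sub]; abel
    have hwnorm : ‖γ • x + (1 - γ) • z₀ - z₀‖ = δ / 2 := by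
      rw [hwz, norm_smul, Real.norm_eq_abs, abs_of_pos hγ0, hγdef]
      field_simp
      ring
    have htlb : t₀ - 1 < t := by
      have := hball _ (by rw [hwnorm]; linarith)
      rw [htw] at this
      exact_mod_cast this
    -- R^p ≥ m₁^(p-2) * R^2
    have hRp : m₁ ^ (p - 2) * R ^ (2 : ℕ) ≤ R ^ p := by
      have h1 : R ^ p = R ^ (p - 2) * R ^ (2 : ℕ) := by
        rw [← Real.rpow_natCast R 2, ← Real.rpow_add hR0]
        norm_num
      rw [h1]
      have h2 : m₁ ^ (p - 2) ≤ R ^ (p - 2) :=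
        Real.rpow_le_rpow hm₁.le (le_trans (min_le_left _ _) hR) (by linarith)
      exact mul_le_mul_of_nonneg_right h2 (by positivity)
    -- combine
    have hγR : γ * (2 / δ * R) = 1 := by
      rw [hγdef]; field_simp
    have hmain : γ * (t₀ - 2 / δ * R + a * R ^ (2 : ℕ)) ≤ γ * r := by
      have h3 : c₀ * γ * (1 - γ) * R ^ p ≥ γ * (a * R ^ (2 : ℕ)) := by
        have h4 : c₀ * (1 - γ) * R ^ p ≥ a * R ^ (2 : ℕ) := by
          have h5 : c₀ * (1 - γ) * R ^ p ≥ c₀ / 2 * R ^ p := by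
            have hRpn : (0:ℝ) ≤ R ^ p := Real.rpow_nonneg hR0.le p
            have : c₀ * (1 - γ) * R ^ p - c₀ / 2 * R ^ p = (c₀ * (1/2 - γ)) * R ^ p := by ring
            nlinarith [mul_nonneg (mul_nonneg hc₀.le (by linarith : (0:ℝ) ≤ 1/2 - γ)) hRpn]
          have h6 : c₀ / 2 * R ^ p ≥ c₀ / 2 * (m₁ ^ (p - 2) * R ^ (2 : ℕ)) := by
            nlinarith
          rw [hadef]; nlinarith
        nlinarith
      nlinarith [hineq, htlb, hγR]
    exact le_of_mul_le_mul_left hmain hγ0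
  -- Bound: for every ξ the function x ↦ ξ x - Θ x is bounded above on the finiteness domain.
  have bddB : ∀ ξ : StrongDual ℝ X, ∃ M : ℝ, ∀ (x : X) (r : ℝ), Θ x = (r : EReal) → ξ x - r ≤ M := by
    intro ξ
    set C₂ : ℝ := ‖ξ‖ + 2 / δ with hC₂def
    refine ⟨max (ξ z₀ + ‖ξ‖ * δ - (t₀ - 1)) (ξ z₀ - t₀ + C₂ ^ (2:ℕ) / (4 * a)), ?_⟩
    intro x r hx
    set R := ‖x - z₀‖ with hRdef
    have hξx : ξ x ≤ ξ z₀ + ‖ξ‖ * R := by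
      have h1 : ξ x - ξ z₀ = ξ (x - z₀) := by rw [map_sub]
      have h2 : ξ (x - z₀) ≤ ‖ξ (x - z₀)‖ := le_abs_self _
      have h3 := ξ.le_opNorm (x - z₀)
      linarith
    rcases lt_or_ge R δ with hRδ | hRδ
    · have hr : t₀ - 1 < r := by
        have := hball x hRδ
        rw [hx] at this
        exact_mod_cast this
      refine le_trans ?_ (le_max_left _ _)
      have hξn : (0:ℝ) ≤ ‖ξ‖ := norm_nonneg _
      nlinarith
    · have hr := coer x r hx hRδ
      refine le_trans ?_ (le_max_right _ _)
      have hq : C₂ * R - a * R ^ (2:ℕ) ≤ C₂ ^ (2:ℕ) / (4 * a) := by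
        rw [le_div_iff₀ (by positivity : (0:ℝ) < 4 * a)]
        nlinarith [sq_nonneg (2 * a * R - C₂)]
      have : ξ x - r ≤ ξ z₀ + ‖ξ‖ * R - (t₀ - 2 / δ * R + a * R ^ (2:ℕ)) := by linarith
      have hexp : ξ z₀ + ‖ξ‖ * R - (t₀ - 2 / δ * R + a * R ^ (2:ℕ))
          = ξ z₀ - t₀ + (C₂ * R - a * R ^ (2:ℕ)) := by rw [hC₂def]; ring
      linarith [hexp ▸ this]
  -- Existence of minimizers with the strong-convexity inequality.
  have hmin : ∀ ξ : StrongDual ℝ X, ∃ (xb : X) (rb : ℝ), Θ xb = (rb : EReal) ∧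
      ∀ (x : X) (r : ℝ), Θ x = (r : EReal) →
        (rb - ξ xb) + c₀ * ‖x - xb‖ ^ p ≤ r - ξ x := by
    intro ξ
    obtain ⟨M, hM⟩ := bddB ξ
    set B : Set ℝ := {t | ∃ (x : X) (r : ℝ), Θ x = (r : EReal) ∧ t = r - ξ x} with hBdef
    have hBne : B.Nonempty := ⟨t₀ - ξ z₀, z₀, t₀, hz₀, rfl⟩
    have hBbd : BddBelow B := by
      refine ⟨-M, ?_⟩
      rintro t ⟨x, r, hx, rfl⟩
      have := hM x r hx; linarith
    set m := sInf B with hmdef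
    have hmle : ∀ (x : X) (r : ℝ), Θ x = (r : EReal) → m ≤ r - ξ x :=
      fun x r hx => csInf_le hBbd ⟨x, r, hx, rfl⟩
    -- minimizing sequence
    have hseq : ∀ n : ℕ, ∃ (x : X) (r : ℝ), Θ x = (r : EReal) ∧ r - ξ x < m + (1/2 : ℝ) ^ n := by
      intro n
      obtain ⟨t, ht, hlt⟩ := Real.lt_sInf_add_pos hBne
        (show (0:ℝ) < (1/2 : ℝ) ^ n by positivity)
      obtain ⟨x, r, hx, rfl⟩ := ht
      exact ⟨x, r, hx, hlt⟩
    choose u v hu hv using hseq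
    -- midpoint estimate
    have midp : ∀ (b c : X) (rb rc : ℝ), Θ b = (rb : EReal) → Θ c = (rc : EReal) →
        c₀ / 4 * ‖c - b‖ ^ p ≤ (rb - ξ b) / 2 + (rc - ξ c) / 2 - m := by
      intro b c rb rc hb hc
      obtain ⟨t, htw, hineq⟩ := key b c rb rc (1/2) hb hc (by norm_num : (0:ℝ) ≤ 1/2) (by norm_num)
      have hmw := hmle _ t htw
      have hξw : ξ ((1/2 : ℝ) • c + (1 - 1/2 : ℝ) • b) = (1/2 : ℝ) * ξ c + (1 - 1/2 : ℝ) * ξ b := by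
        rw [map_add, map_smul, map_smul]; rfl
      rw [hξw] at hmw
      nlinarith [hineq, hmw]
    -- Cauchy
    have hcau : CauchySeq u := by
      apply cauchySeq_of_le_tendsto_0 (fun N => (4 / c₀ * (1/2 : ℝ) ^ N) ^ (1 / p))
      · intro n k N hn hk
        have h1 := midp (u n) (u k) (v n) (v k) (hu n) (hu k)
        have h2 := hv n
        have h3 := hv k
        have hpow : ∀ j : ℕ, N ≤ j → ((1:ℝ)/2) ^ j ≤ (1/2 : ℝ) ^ N := fun j hj =>
          pow_le_pow_of_le_one (by norm_num) (by norm_num) hj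
        have h4 : c₀ / 4 * ‖u k - u n‖ ^ p ≤ (1/2 : ℝ) ^ N := by
          have := hpow n hn; have := hpow k hk
          linarith
        have h5 : ‖u k - u n‖ ^ p ≤ 4 / c₀ * (1/2 : ℝ) ^ N := by
          rw [div_mul_eq_mul_div, le_div_iff₀ hc₀]
          linarith
        have h6 : ‖u k - u n‖ = (‖u k - u n‖ ^ p) ^ (1 / p) := by
          rw [← Real.rpow_mul (norm_nonneg _), mul_one_div, div_self (by positivity : p ≠ 0),
            Real.rpow_one]
        rw [dist_eq_norm, ← norm_sub_rev, h6]
        exact Real.rpow_le_rpow (Real.rpow_nonneg (norm_nonneg _) p) h5 (by positivity)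
      · have hin : Filter.Tendsto (fun N : ℕ => 4 / c₀ * (1/2 : ℝ) ^ N) Filter.atTop (nhds 0) := by
          have := tendsto_pow_atTop_nhds_zero_of_lt_one
            (show (0:ℝ) ≤ 1/2 by norm_num) (show (1:ℝ)/2 < 1 by norm_num)
          simpa using this.const_mul (4 / c₀)
        have := hin.rpow_const (Or.inr (by positivity : (0:ℝ) ≤ 1 / p))
        rwa [Real.zero_rpow (by positivity : 1 / p ≠ 0)] at this
    obtain ⟨xb, hxb⟩ := cauchySeq_tendsto_of_complete hcau
    have hξu : Filter.Tendsto (fun n => ξ (u n)) Filter.atTop (nhds (ξ xb)) :=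
      (ξ.continuous.tendsto xb).comp hxb
    have hhalf : Filter.Tendsto (fun n : ℕ => ((1:ℝ)/2) ^ n) Filter.atTop (nhds 0) :=
      tendsto_pow_atTop_nhds_zero_of_lt_one (by norm_num) (by norm_num)
    -- Θ xb ≤ m + ξ xb
    have hle : Θ xb ≤ ((m + ξ xb : ℝ) : EReal) := by
      by_contra hcon
      push_neg at hcon
      obtain ⟨c, hc1, hc2⟩ := EReal.exists_between_coe_real hcon
      have hev : ∀ᶠ n in Filter.atTop, (c : EReal) < Θ (u n) := hxb.eventually (hlsc xb _ hc2)
      have hlim : Filter.Tendsto (fun n => m + ((1:ℝ)/2) ^ n + ξ (u n)) Filter.atTop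
          (nhds (m + 0 + ξ xb)) := (tendsto_const_nhds.add hhalf).add hξu
      have hcle : c ≤ m + 0 + ξ xb := by
        refine ge_of_tendsto hlim ?_
        filter_upwards [hev] with n hn
        have hcv : c < v n := by
          rw [hu n] at hn
          exact_mod_cast hn
        have := hv n
        linarith
      have : (m + ξ xb : ℝ) < c := by exact_mod_cast hc1
      linarith
    have hnetop : Θ xb ≠ ⊤ := fun h => by
      rw [h] at hle
      exact EReal.coe_ne_top _ (top_le_iff.mp hle)
    set rb := (Θ xb).toReal with hrbdef
    have hxbr : Θ xb = (rb : EReal) := (EReal.coe_toReal hnetop (hbot xb)).symm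
    have hrb_le : rb ≤ m + ξ xb := by
      rw [hxbr] at hle
      exact_mod_cast hle
    have hrbm : rb - ξ xb = m := le_antisymm (by linarith) (hmle _ _ hxbr)
    refine ⟨xb, rb, hxbr, ?_⟩
    intro x r hx
    -- strong convexity at the minimizer, letting γ → 0⁺
    have hγall : ∀ γ : ℝ, 0 < γ → γ < 1 → m + ξ x + c₀ * (1 - γ) * ‖x - xb‖ ^ p ≤ r := by
      intro γ hγ0 hγ1
      obtain ⟨t, htw, hineq⟩ := key xb x rb r γ hxbr hx hγ0.le hγ1.le
      have hmw := hmle _ t htw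
      have hξw : ξ (γ • x + (1 - γ) • xb) = γ * ξ x + (1 - γ) * ξ xb := by
        rw [map_add, map_smul, map_smul]; rfl
      rw [hξw] at hmw
      have hrbeq : rb = m + ξ xb := by linarith
      have hmul : γ * (m + ξ x + c₀ * (1 - γ) * ‖x - xb‖ ^ p) ≤ γ * r := by
        have hC : (1 - γ) * rb = (1 - γ) * m + (1 - γ) * ξ xb := by rw [hrbeq]; ring
        nlinarith [hineq, hmw, hC]
      exact le_of_mul_le_mul_left hmul hγ0
    have hlim : Filter.Tendsto (fun γ : ℝ => m + ξ x + c₀ * (1 - γ) * ‖x - xb‖ ^ p)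
        (nhdsWithin 0 (Set.Ioi 0)) (nhds (m + ξ x + c₀ * (1 - 0) * ‖x - xb‖ ^ p)) := by
      apply Filter.Tendsto.mono_left _ nhdsWithin_le_nhds
      exact Continuous.tendsto (by fun_prop) 0
    have hev : ∀ᶠ γ in nhdsWithin (0:ℝ) (Set.Ioi 0),
        m + ξ x + c₀ * (1 - γ) * ‖x - xb‖ ^ p ≤ r := by
      filter_upwards [Ioo_mem_nhdsGT_of_mem (Set.mem_Ico.mpr ⟨le_refl 0, one_pos⟩)] with γ hγ
      exact hγall γ hγ.1 hγ.2
    have := le_of_tendsto hlim hev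
    have hrbm' : rb - ξ xb = m := hrbm
    simp only [sub_zero, mul_one] at this
    linarith
  choose G Rb hG1 hG2 using hmin
  -- the value formula for the conjugate
  have hval : ∀ ξ : StrongDual ℝ X, fenchelConj Θ ξ = ((ξ (G ξ) - Rb ξ : ℝ) : EReal) := by
    intro ξ
    apply le_antisymm
    · apply iSup_le
      intro z
      rcases eq_or_ne (Θ z) ⊤ with hz | hz
      · rw [hz]
        simp
      · have hzr : Θ z = ((Θ z).toReal : EReal) := (EReal.coe_toReal hz (hbot z)).symm
        rw [hzr, ← EReal.coe_sub]
        have h := hG2 ξ z (Θ z).toReal hzr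
        have hd : (0:ℝ) ≤ c₀ * ‖z - G ξ‖ ^ p := by positivity
        exact_mod_cast (by linarith : ξ z - (Θ z).toReal ≤ ξ (G ξ) - Rb ξ)
    · have h := le_iSup (fun z : X => ((ξ z : ℝ) : EReal) - Θ z) (G ξ)
      rwa [hG1 ξ, ← EReal.coe_sub] at h
  have part1 : ∀ ξ : StrongDual ℝ X, fenchelConj Θ ξ ≠ ⊤ ∧ fenchelConj Θ ξ ≠ ⊥ := by
    intro ξ
    rw [hval ξ]
    exact ⟨EReal.coe_ne_top _, EReal.coe_ne_bot _⟩
  have hΦ : ∀ ξ : StrongDual ℝ X, (fenchelConj Θ ξ).toReal = ξ (G ξ) - Rb ξ := fun ξ => by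
    rw [hval ξ]; exact EReal.toReal_coe _
  -- Hölder estimate for G
  have hold : ∀ ξ₁ ξ₂ : StrongDual ℝ X, ‖G ξ₁ - G ξ₂‖ ≤ (‖ξ₁ - ξ₂‖ / (2 * c₀)) ^ (1 / (p - 1)) := by
    intro ξ₁ ξ₂
    set d := ‖G ξ₁ - G ξ₂‖ with hddef
    have h1 := hG2 ξ₁ (G ξ₂) (Rb ξ₂) (hG1 ξ₂)
    have h2 := hG2 ξ₂ (G ξ₁) (Rb ξ₁) (hG1 ξ₁)
    rw [show ‖G ξ₂ - G ξ₁‖ = d by rw [hddef, norm_sub_rev]] at h1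
    have hsum : 2 * c₀ * d ^ p ≤ ξ₁ (G ξ₁) - ξ₁ (G ξ₂) - ξ₂ (G ξ₁) + ξ₂ (G ξ₂) := by linarith
    have happ : ξ₁ (G ξ₁) - ξ₁ (G ξ₂) - ξ₂ (G ξ₁) + ξ₂ (G ξ₂) = (ξ₁ - ξ₂) (G ξ₁ - G ξ₂) := by
      simp [map_sub]
      ring
    have hop : (ξ₁ - ξ₂) (G ξ₁ - G ξ₂) ≤ ‖ξ₁ - ξ₂‖ * d := by
      have h3 := (ξ₁ - ξ₂).le_opNorm (G ξ₁ - G ξ₂)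
      have h4 : (ξ₁ - ξ₂) (G ξ₁ - G ξ₂) ≤ ‖(ξ₁ - ξ₂) (G ξ₁ - G ξ₂)‖ := le_abs_self _
      rw [hddef]
      linarith
    have hkey : 2 * c₀ * d ^ p ≤ ‖ξ₁ - ξ₂‖ * d := by rw [happ] at hsum; linarith
    rcases eq_or_lt_of_le (show (0:ℝ) ≤ d from norm_nonneg _) with hd0 | hd0
    · rw [← hd0]
      exact Real.rpow_nonneg (by positivity) _
    · have hp1 : d ^ (p - 1) ≤ ‖ξ₁ - ξ₂‖ / (2 * c₀) := by
        rw [Real.rpow_sub hd0, Real.rpow_one, div_le_div_iff₀ hd0 (by positivity)]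
        linarith
      calc d = (d ^ (p - 1)) ^ (1 / (p - 1)) := by
            rw [← Real.rpow_mul hd0.le, mul_one_div, div_self (by linarith : p - 1 ≠ 0),
              Real.rpow_one]
        _ ≤ (‖ξ₁ - ξ₂‖ / (2 * c₀)) ^ (1 / (p - 1)) :=
            Real.rpow_le_rpow (Real.rpow_nonneg hd0.le _) hp1
              (div_nonneg zero_le_one (by linarith))
  refine ⟨part1, G, ?_, hold⟩
  -- differentiability
  intro ξ
  have heq : (fun η : StrongDual ℝ X => (fenchelConj Θ η).toReal) = fun η => η (G η) - Rb η :=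
    funext hΦ
  rw [heq, hasFDerivAt_iff_isLittleO_nhds_zero]
  have hub : ∀ η : StrongDual ℝ X,
      0 ≤ (η (G η) - Rb η) - (ξ (G ξ) - Rb ξ) - (η - ξ) (G ξ) ∧
      (η (G η) - Rb η) - (ξ (G ξ) - Rb ξ) - (η - ξ) (G ξ)
        ≤ ‖η - ξ‖ * (‖η - ξ‖ / (2 * c₀)) ^ (1 / (p - 1)) := by
    intro η
    have hl := hG2 η (G ξ) (Rb ξ) (hG1 ξ)
    have hu' := hG2 ξ (G η) (Rb η) (hG1 η)
    have hd1 : (0:ℝ) ≤ c₀ * ‖G ξ - G η‖ ^ p := by positivity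
    have hd2 : (0:ℝ) ≤ c₀ * ‖G η - G ξ‖ ^ p := by positivity
    have hsub : (η - ξ) (G ξ) = η (G ξ) - ξ (G ξ) := by simp
    constructor
    · rw [hsub]; linarith
    · have hsub2 : (η - ξ) (G η - G ξ) = η (G η) - η (G ξ) - ξ (G η) + ξ (G ξ) := by
        simp [map_sub]; ring
      have hop : (η - ξ) (G η - G ξ) ≤ ‖η - ξ‖ * ‖G η - G ξ‖ := by
        have h3 := (η - ξ).le_opNorm (G η - G ξ)
        have h4 : (η - ξ) (G η - G ξ) ≤ ‖(η - ξ) (G η - G ξ)‖ := le_abs_self _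
        linarith
      have hGle : ‖G η - G ξ‖ ≤ (‖η - ξ‖ / (2 * c₀)) ^ (1 / (p - 1)) := hold η ξ
      have h5 : ‖η - ξ‖ * ‖G η - G ξ‖ ≤ ‖η - ξ‖ * (‖η - ξ‖ / (2 * c₀)) ^ (1 / (p - 1)) :=
        mul_le_mul_of_nonneg_left hGle (norm_nonneg _)
      rw [hsub]
      nlinarith [hsub2, hop]
  rw [Asymptotics.isLittleO_iff]
  intro c hc
  have hδ' : (0:ℝ) < 2 * c₀ * c ^ (p - 1) := by
    have := Real.rpow_pos_of_pos hc (p - 1)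
    positivity
  filter_upwards [Metric.ball_mem_nhds (0 : StrongDual ℝ X) hδ'] with h hh
  rw [Metric.mem_ball, dist_zero_right] at hh
  have hsimp : ξ + h - ξ = h := by abel
  obtain ⟨hl, hu'⟩ := hub (ξ + h)
  rw [hsimp] at hl hu'
  have hdual : (inclusionInDoubleDual ℝ X (G ξ)) h = h (G ξ) := dual_def ℝ X (G ξ) h
  have hhc : (‖h‖ / (2 * c₀)) ^ (1 / (p - 1)) ≤ c := by
    have h1 : ‖h‖ / (2 * c₀) ≤ c ^ (p - 1) := by
      rw [div_le_iff₀ (by positivity)]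
      calc ‖h‖ ≤ 2 * c₀ * c ^ (p - 1) := hh.le
        _ = c ^ (p - 1) * (2 * c₀) := by ring
    calc (‖h‖ / (2 * c₀)) ^ (1 / (p - 1)) ≤ (c ^ (p - 1)) ^ (1 / (p - 1)) :=
          Real.rpow_le_rpow (by positivity) h1 (div_nonneg zero_le_one (by linarith))
      _ = c := by
          rw [← Real.rpow_mul hc.le, mul_one_div, div_self (by linarith : p - 1 ≠ 0),
            Real.rpow_one]
  have hexpr : ((ξ + h) (G (ξ + h)) - Rb (ξ + h)) - (ξ (G ξ) - Rb ξ)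
      - (inclusionInDoubleDual ℝ X (G ξ)) h = ((ξ + h) (G (ξ + h)) - Rb (ξ + h))
      - (ξ (G ξ) - Rb ξ) - h (G ξ) := by rw [hdual]
  have hhGξ : h (G ξ) = (h : StrongDual ℝ X) (G ξ) := rfl
  rw [Real.norm_eq_abs]
  have hlval : (ξ + h - ξ) (G ξ) = h (G ξ) := by rw [hsimp]
  calc |((ξ + h) (G (ξ + h)) - Rb (ξ + h)) - (ξ (G ξ) - Rb ξ)
        - (inclusionInDoubleDual ℝ X (G ξ)) h|
      = ((ξ + h) (G (ξ + h)) - Rb (ξ + h)) - (ξ (G ξ) - Rb ξ) - h (G ξ) := by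
        rw [hexpr, abs_of_nonneg (by rw [← hlval, ← hsimp] at hl ⊢; exact hl)]
    _ ≤ ‖h‖ * (‖h‖ / (2 * c₀)) ^ (1 / (p - 1)) := by
        rw [← hlval, ← hsimp] at hu' ⊢; exact hu'
    _ ≤ ‖h‖ * c := mul_le_mul_of_nonneg_left hhc (norm_nonneg _)
    _ = c * ‖h‖ := mul_comm _ _
end

section
/- Let X be a reflexive Banach space, Θ proper, lower semi-continuous, p-convex (p ≥ 2), F : D(F) ⊂ X → Y weakly closed, and x₀ ∈ X, ξ₀ ∈ ∂Θ(x₀). If the feasible set S = {x ∈ D(Θ) ∩ D(F) : F(x) = y} is nonempty, then there exists a minimizer x† ∈ S of x ↦ D_{ξ₀}Θ(x, x₀) over S. -/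
open NormedSpace Filter
open Topology TopologicalSpace

theorem aux_exists_dual_annihilator {E : Type*} [NormedAddCommGroup E] [NormedSpace ℝ E]
    (M : Submodule ℝ E) (hM : IsClosed (M : Set E)) {x : E} (hx : x ∉ M) :
    ∃ f : StrongDual ℝ E, (∀ m ∈ M, f m = 0) ∧ f x ≠ 0 := by
  obtain ⟨f, u, hfu, hux⟩ := geometric_hahn_banach_closed_point
    (s := (M : Set E)) (M.convex) hM hx
  refine ⟨f, ?_, ?_⟩
  · intro m hm
    by_contra h
    have h1 : ((u + 1) / f m) • m ∈ M := M.smul_mem _ hm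
    have := hfu _ h1
    rw [map_smul, smul_eq_mul, div_mul_cancel₀ _ h] at this
    linarith
  · have h0 : f 0 < u := hfu 0 M.zero_mem
    rw [map_zero] at h0
    intro h
    rw [h] at hux
    linarith

theorem aux_subspace_reflexive {X : Type*} [NormedAddCommGroup X] [NormedSpace ℝ X]
    (hrefl : Function.Surjective (inclusionInDoubleDual ℝ X))
    (M : Submodule ℝ X) (hM : IsClosed (M : Set X)) :
    Function.Surjective (inclusionInDoubleDual ℝ ↥M) := by
  intro Λ
  -- the restriction map on duals
  set T : StrongDual ℝ X → StrongDual ℝ ↥M := fun ξ => ξ.comp M.subtypeL with hT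
  have hTnorm : ∀ ξ : StrongDual ℝ X, ‖T ξ‖ ≤ ‖ξ‖ := by
    intro ξ
    refine ContinuousLinearMap.opNorm_le_bound _ (norm_nonneg ξ) fun m => ?_
    calc ‖ξ (M.subtypeL m)‖ ≤ ‖ξ‖ * ‖M.subtypeL m‖ := ξ.le_opNorm _
    _ = ‖ξ‖ * ‖m‖ := by simp
  -- Λ ∘ T as an element of X''
  set Ξ : StrongDual ℝ (StrongDual ℝ X) := LinearMap.mkContinuous
    { toFun := fun ξ => Λ (T ξ)
      map_add' := fun ξ η => by
        simp only [hT, ContinuousLinearMap.add_comp, map_add]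
      map_smul' := fun c ξ => by
        simp only [hT, ContinuousLinearMap.smul_comp, map_smul, RingHom.id_apply,
          smul_eq_mul] }
    ‖Λ‖ (by
      intro ξ
      calc ‖Λ (T ξ)‖ ≤ ‖Λ‖ * ‖T ξ‖ := Λ.le_opNorm _
      _ ≤ ‖Λ‖ * ‖ξ‖ := by
        exact mul_le_mul_of_nonneg_left (hTnorm ξ) (norm_nonneg Λ)) with hΞ
  obtain ⟨x, hx⟩ := hrefl Ξ
  have hxapp : ∀ ξ : StrongDual ℝ X, ξ x = Λ (T ξ) := by
    intro ξ
    have := congrFun (congrArg DFunLike.coe hx) ξ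
    rw [dual_def] at this
    exact this.symm ▸ rfl
  have hxM : x ∈ M := by
    by_contra hxM
    obtain ⟨f, hf0, hfx⟩ := aux_exists_dual_annihilator M hM hxM
    have hTf : T f = 0 := by
      ext m; exact hf0 m m.2
    have := hxapp f
    rw [hTf, map_zero] at this
    exact hfx this
  refine ⟨⟨x, hxM⟩, ?_⟩
  ext η
  rw [dual_def]
  -- extend η to all of X
  obtain ⟨ξ, hξext, -⟩ := exists_extension_norm_eq (M : Submodule ℝ X) η
  have hTξ : T ξ = η := by ext m; exact hξext m
  rw [← hTξ, ← hxapp ξ]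
  show ξ (M.subtypeL ⟨x, hxM⟩) = ξ x
  rfl

theorem aux_separable_of_dual {E : Type*} [NormedAddCommGroup E] [NormedSpace ℝ E]
    (hsep : SeparableSpace (StrongDual ℝ E)) : SeparableSpace E := by
  haveI := hsep
  obtain ⟨f, hf⟩ : ∃ f : ℕ → StrongDual ℝ E, DenseRange f := exists_dense_seq _
  -- choose near-norming vectors
  have hchoice : ∀ n, ∃ z : E, ‖z‖ ≤ 1 ∧ ‖f n‖ / 2 ≤ ‖f n z‖ := by
    intro n
    rcases eq_or_ne (f n) 0 with h0 | h0
    · exact ⟨0, by simp [h0]⟩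
    · have hpos : 0 < ‖f n‖ := norm_pos_iff.mpr h0
      by_contra hcon
      push_neg at hcon
      have : ‖f n‖ ≤ ‖f n‖ / 2 := by
        refine ContinuousLinearMap.opNorm_le_bound _ (by positivity) fun z => ?_
        rcases eq_or_ne z 0 with rfl | hz
        · simp
        · have hz1 : ‖‖z‖⁻¹ • z‖ ≤ 1 := by
            rw [norm_smul, norm_inv, norm_norm, inv_mul_cancel₀ (norm_ne_zero_iff.mpr hz)]
          have := (hcon _ hz1).le
          rw [map_smul, norm_smul, norm_inv, norm_norm] at this
          have hzpos : (0:ℝ) < ‖z‖ := norm_pos_iff.mpr hz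
          calc ‖f n z‖ = ‖z‖ * (‖z‖⁻¹ * ‖f n z‖) := by field_simp
          _ ≤ ‖z‖ * (‖f n‖ / 2) := by
              exact mul_le_mul_of_nonneg_left this hzpos.le
          _ = ‖f n‖ / 2 * ‖z‖ := by ring
      linarith
  choose g hg1 hg2 using hchoice
  set N : Submodule ℝ E := (Submodule.span ℝ (Set.range g)).topologicalClosure with hN
  have hNsep : IsSeparable (N : Set E) := by
    rw [hN, Submodule.topologicalClosure_coe]
    exact (((Set.countable_range g).isSeparable).span).closure
  have hNtop : ∀ x : E, x ∈ N := by
    intro x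
    by_contra hx
    obtain ⟨F, hF0, hFx⟩ := aux_exists_dual_annihilator N
      (Submodule.isClosed_topologicalClosure _) hx
    have hFne : F ≠ 0 := fun h => hFx (by rw [h]; rfl)
    set F' : StrongDual ℝ E := ‖F‖⁻¹ • F with hF'
    have hF'norm : ‖F'‖ = 1 := by
      rw [hF', norm_smul, norm_inv, norm_norm,
        inv_mul_cancel₀ (norm_ne_zero_iff.mpr hFne)]
    have hF'0 : ∀ m ∈ N, F' m = 0 := by
      intro m hm; rw [hF']; simp [hF0 m hm]
    obtain ⟨n, hn⟩ : ∃ n, ‖f n - F'‖ < 1/4 := by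
      obtain ⟨n, hfn⟩ := Metric.denseRange_iff.mp hf F' (1/4) (by norm_num)
      refine ⟨n, ?_⟩
      rw [dist_comm, dist_eq_norm] at hfn
      exact hfn
    have hgN : g n ∈ N := by
      exact Submodule.le_topologicalClosure _ (Submodule.subset_span ⟨n, rfl⟩)
    have h1 : ‖f n (g n)‖ ≤ 1/4 := by
      have : f n (g n) = (f n - F') (g n) := by
        simp [hF'0 _ hgN]
      rw [this]
      calc ‖(f n - F') (g n)‖ ≤ ‖f n - F'‖ * ‖g n‖ := (f n - F').le_opNorm _
      _ ≤ 1/4 * 1 := mul_le_mul hn.le (hg1 n) (norm_nonneg _) (by norm_num)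
      _ = 1/4 := by ring
    have h2 : 3/4 ≤ ‖f n‖ := by
      have habs := abs_norm_sub_norm_le (f n) F'
      rw [hF'norm] at habs
      have := (abs_le.mp habs).1
      linarith
    have := hg2 n
    linarith
  have : (Set.univ : Set E) = (N : Set E) := by
    ext z; simp [hNtop z]
  rw [← isSeparable_univ_iff, this]
  exact hNsep

theorem aux_weak_seq_compact {X : Type*} [NormedAddCommGroup X] [NormedSpace ℝ X]
    (hrefl : Function.Surjective (inclusionInDoubleDual ℝ X))
    (u : ℕ → X) (B : ℝ) (hB : ∀ n, ‖u n‖ ≤ B) :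
    ∃ (x : X) (φ : ℕ → ℕ), StrictMono φ ∧
      ∀ ξ : StrongDual ℝ X, Tendsto (fun n => ξ (u (φ n))) atTop (𝓝 (ξ x)) := by
  set B' : ℝ := max B 0 with hB'
  have hB'0 : 0 ≤ B' := le_max_right _ _
  have hB'B : ∀ n, ‖u n‖ ≤ B' := fun n => le_trans (hB n) (le_max_left _ _)
  set M : Submodule ℝ X := (Submodule.span ℝ (Set.range u)).topologicalClosure with hM
  have hMclosed : IsClosed (M : Set X) := Submodule.isClosed_topologicalClosure _
  have huM : ∀ n, u n ∈ M := fun n =>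
    Submodule.le_topologicalClosure _ (Submodule.subset_span ⟨n, rfl⟩)
  set v : ℕ → ↥M := fun n => ⟨u n, huM n⟩ with hv
  have hvB : ∀ n, ‖v n‖ ≤ B' := fun n => hB'B n
  haveI hMsep : SeparableSpace ↥M := by
    have : IsSeparable (M : Set X) := by
      rw [hM, Submodule.topologicalClosure_coe]
      exact (((Set.countable_range u).isSeparable).span).closure
    exact this.separableSpace
  have hMrefl := aux_subspace_reflexive hrefl M hMclosed
  haveI hM''sep : SeparableSpace (StrongDual ℝ (StrongDual ℝ ↥M)) :=
    (hMrefl.denseRange).separableSpace (inclusionInDoubleDual ℝ ↥M).continuous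
  haveI hM'sep : SeparableSpace (StrongDual ℝ ↥M) := aux_separable_of_dual (E := StrongDual ℝ ↥M) hM''sep
  obtain ⟨η, hη⟩ : ∃ η : ℕ → StrongDual ℝ ↥M, DenseRange η := exists_dense_seq _
  -- diagonal extraction via sequential compactness of a countable product
  set K : Set (ℕ → ℝ) := Set.univ.pi (fun k => Metric.closedBall (0:ℝ) (‖η k‖ * B')) with hK
  have hKcomp : IsCompact K := isCompact_univ_pi fun k => isCompact_closedBall _ _
  have hgK : ∀ n, (fun k => η k (v n)) ∈ K := by
    intro n
    rw [hK, Set.mem_univ_pi]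
    intro k
    rw [Metric.mem_closedBall, Real.dist_eq, sub_zero, ← Real.norm_eq_abs]
    calc ‖η k (v n)‖ ≤ ‖η k‖ * ‖v n‖ := (η k).le_opNorm _
    _ ≤ ‖η k‖ * B' := mul_le_mul_of_nonneg_left (hvB n) (norm_nonneg (η k))
  obtain ⟨l, -, φ, hφ, hconv⟩ := hKcomp.isSeqCompact hgK
  have hck : ∀ k, Tendsto (fun n => η k (v (φ n))) atTop (𝓝 (l k)) := by
    intro k
    exact (tendsto_pi_nhds.mp hconv) k
  -- every functional converges along the subsequence
  have hcauchy : ∀ ζ : StrongDual ℝ ↥M, ∃ L, Tendsto (fun n => ζ (v (φ n))) atTop (𝓝 L) := by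
    intro ζ
    refine cauchySeq_tendsto_of_complete ?_
    rw [Metric.cauchySeq_iff]
    intro ε hε
    have hd : (0:ℝ) < ε / (3 * (B' + 1)) := by positivity
    obtain ⟨k, hk⟩ := Metric.denseRange_iff.mp hη ζ _ hd
    rw [dist_comm, dist_eq_norm (η k) ζ] at hk
    have hCk : CauchySeq (fun n => η k (v (φ n))) := (hck k).cauchySeq
    obtain ⟨N, hN⟩ := Metric.cauchySeq_iff.mp hCk (ε/3) (by positivity)
    refine ⟨N, fun m hm n hn => ?_⟩
    have hterm : ∀ j, |ζ (v (φ j)) - η k (v (φ j))| ≤ ε / 3 := by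
      intro j
      rw [← Real.norm_eq_abs]
      have h1 : ζ (v (φ j)) - η k (v (φ j)) = (ζ - η k) (v (φ j)) := by simp
      rw [h1]
      calc ‖(ζ - η k) (v (φ j))‖ ≤ ‖ζ - η k‖ * ‖v (φ j)‖ := (ζ - η k).le_opNorm _
      _ ≤ ‖η k - ζ‖ * B' := by
          rw [norm_sub_rev ζ (η k)]
          exact mul_le_mul_of_nonneg_left (hvB _) (norm_nonneg (η k - ζ))
      _ ≤ (ε / (3 * (B' + 1))) * B' := mul_le_mul_of_nonneg_right hk.le hB'0
      _ ≤ ε / 3 := by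
          rw [div_mul_eq_mul_div, div_le_div_iff₀ (by positivity) (by norm_num)]
          nlinarith
    have hmid := hN m hm n hn
    rw [Real.dist_eq] at hmid ⊢
    calc |ζ (v (φ m)) - ζ (v (φ n))|
        ≤ |ζ (v (φ m)) - η k (v (φ m))| + |η k (v (φ m)) - η k (v (φ n))|
          + |η k (v (φ n)) - ζ (v (φ n))| := by
          have := abs_sub_le (ζ (v (φ m))) (η k (v (φ m))) (ζ (v (φ n)))
          have h2 := abs_sub_le (η k (v (φ m))) (η k (v (φ n))) (ζ (v (φ n)))
          linarith
    _ < ε / 3 + ε / 3 + ε / 3 := by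
        have h3 := hterm m
        have h4 := hterm n
        rw [abs_sub_comm] at h4
        linarith
    _ = ε := by ring
  choose L hL using hcauchy
  -- the limit functional
  have hLbound : ∀ ζ : StrongDual ℝ ↥M, ‖L ζ‖ ≤ B' * ‖ζ‖ := by
    intro ζ
    rw [Real.norm_eq_abs, abs_le]
    constructor
    · refine ge_of_tendsto (hL ζ) (Eventually.of_forall fun n => ?_)
      have := (ζ.le_opNorm (v (φ n)))
      have h5 : ‖ζ (v (φ n))‖ ≤ ‖ζ‖ * B' := le_trans this
        (mul_le_mul_of_nonneg_left (hvB _) (norm_nonneg _))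
      rw [Real.norm_eq_abs, abs_le] at h5
      linarith [h5.1]
    · refine le_of_tendsto (hL ζ) (Eventually.of_forall fun n => ?_)
      have := (ζ.le_opNorm (v (φ n)))
      have h5 : ‖ζ (v (φ n))‖ ≤ ‖ζ‖ * B' := le_trans this
        (mul_le_mul_of_nonneg_left (hvB _) (norm_nonneg _))
      rw [Real.norm_eq_abs, abs_le] at h5
      linarith [h5.2]
  set Λ : StrongDual ℝ (StrongDual ℝ ↥M) := LinearMap.mkContinuous
    { toFun := L
      map_add' := fun ζ₁ ζ₂ => by
        refine tendsto_nhds_unique (hL (ζ₁ + ζ₂)) ?_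
        have := (hL ζ₁).add (hL ζ₂)
        simpa using this
      map_smul' := fun c ζ => by
        refine tendsto_nhds_unique (hL (c • ζ)) ?_
        have := (hL ζ).const_mul c
        simpa [smul_eq_mul] using this }
    B' hLbound with hΛ
  obtain ⟨x', hx'⟩ := hMrefl Λ
  have hx'app : ∀ ζ : StrongDual ℝ ↥M, ζ x' = L ζ := by
    intro ζ
    have := congrFun (congrArg DFunLike.coe hx') ζ
    rw [dual_def] at this
    exact this
  refine ⟨(x' : X), φ, hφ, fun ξ => ?_⟩
  have hζ : ∀ n, (ξ.comp M.subtypeL) (v n) = ξ (u n) := fun n => rfl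
  have hζx : (ξ.comp M.subtypeL) x' = ξ (x' : X) := rfl
  have := hL (ξ.comp M.subtypeL)
  rw [hx'app (ξ.comp M.subtypeL)] at hζx
  rw [← hζx]
  simpa [hζ] using this

/-- Let `X` be a reflexive Banach space, `Θ` proper, lower semi-continuous and `p`-convex
(`p ≥ 2`), `F : D(F) ⊂ X → Y` weakly closed, and `ξ₀ ∈ ∂Θ(x₀)`. If the feasible set
`S = {x ∈ D(Θ) ∩ D(F) : F(x) = y}` is nonempty, then there exists a minimizer `x† ∈ S`
of `x ↦ D_{ξ₀}Θ(x, x₀)` over `S`. -/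
theorem exists_bregman_minimizer {X Y : Type*} [NormedAddCommGroup X] [NormedSpace ℝ X]
    [CompleteSpace X] [NormedAddCommGroup Y] [NormedSpace ℝ Y]
    (hrefl : Function.Surjective (inclusionInDoubleDual ℝ X))
    (Θ : X → EReal) (p c₀ : ℝ) (hp : 2 ≤ p) (hc₀ : 0 < c₀)
    (hproper : ∃ z, Θ z ≠ ⊤) (hbot : ∀ z, Θ z ≠ ⊥)
    (hlsc : LowerSemicontinuous Θ)
    (hpconv : ∀ x xb : X, ∀ γ : ℝ, 0 ≤ γ → γ ≤ 1 →
      Θ (γ • xb + (1 - γ) • x) + ((c₀ * γ * (1 - γ) * ‖xb - x‖ ^ p : ℝ) : EReal)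
        ≤ (γ : EReal) * Θ xb + ((1 - γ : ℝ) : EReal) * Θ x)
    (DF : Set X) (F : X → Y)
    (hweakclosed : ∀ (u : ℕ → X) (x : X) (z : Y), (∀ n, u n ∈ DF) →
      (∀ ξ : StrongDual ℝ X, Tendsto (fun n => ξ (u n)) atTop (nhds (ξ x))) →
      Tendsto (fun n => F (u n)) atTop (nhds z) → x ∈ DF ∧ F x = z)
    (x₀ : X) (ξ₀ : StrongDual ℝ X)
    (hξ₀ : ∀ z : X, Θ x₀ + ((ξ₀ (z - x₀) : ℝ) : EReal) ≤ Θ z)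
    (y : Y)
    (hS : ∃ x, Θ x ≠ ⊤ ∧ x ∈ DF ∧ F x = y) :
    ∃ xdag : X, (Θ xdag ≠ ⊤ ∧ xdag ∈ DF ∧ F xdag = y) ∧
      ∀ x : X, Θ x ≠ ⊤ → x ∈ DF → F x = y →
        Θ xdag - Θ x₀ - ((ξ₀ (xdag - x₀) : ℝ) : EReal)
          ≤ Θ x - Θ x₀ - ((ξ₀ (x - x₀) : ℝ) : EReal) := by
  obtain ⟨xs, hxsT, hxsDF, hxsF⟩ := hS
  -- Θ x₀ is finite
  have hx₀top : Θ x₀ ≠ ⊤ := by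
    intro h
    have := hξ₀ xs
    rw [h] at this
    rw [EReal.top_add_coe] at this
    exact hxsT (top_le_iff.mp this)
  set a₀ : ℝ := (Θ x₀).toReal with ha₀
  have hΘx₀ : Θ x₀ = (a₀ : EReal) := (EReal.coe_toReal hx₀top (hbot x₀)).symm
  set θ : X → ℝ := fun z => (Θ z).toReal with hθdef
  have hθ : ∀ z, Θ z ≠ ⊤ → Θ z = ((θ z : ℝ) : EReal) :=
    fun z hz => (EReal.coe_toReal hz (hbot z)).symm
  set D : X → ℝ := fun z => θ z - a₀ - ξ₀ (z - x₀) with hDdef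
  clear_value D
  -- the subgradient inequality, real form
  have hsub : ∀ z, Θ z ≠ ⊤ → a₀ + ξ₀ (z - x₀) ≤ θ z := by
    intro z hz
    have := hξ₀ z
    rw [hΘx₀, hθ z hz, ← EReal.coe_add] at this
    exact_mod_cast this
  have hD0 : ∀ z, Θ z ≠ ⊤ → 0 ≤ D z := by
    intro z hz
    have := hsub z hz
    simp only [hDdef]
    linarith
  -- coercivity
  have hcoer : ∀ z, Θ z ≠ ⊤ → c₀ / 2 * ‖z - x₀‖ ^ p ≤ D z := by
    intro z hz
    have hpc := hpconv x₀ z (1/2) (by norm_num) (by norm_num)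
    set w : X := (1/2 : ℝ) • z + (1 - 1/2 : ℝ) • x₀ with hw
    have hw0 : w - x₀ = (1/2 : ℝ) • (z - x₀) := by
      rw [hw]; module
    have hξw : ξ₀ (w - x₀) = 1/2 * ξ₀ (z - x₀) := by
      rw [hw0, map_smul, smul_eq_mul]
    have hlow := hξ₀ w
    rw [hΘx₀, hξw] at hlow
    rw [hθ z hz, hΘx₀] at hpc
    rw [← EReal.coe_mul, ← EReal.coe_mul, ← EReal.coe_add] at hpc
    have hchain : ((a₀ + 1/2 * ξ₀ (z - x₀) : ℝ) : EReal)
        + ((c₀ * (1/2) * (1 - 1/2) * ‖z - x₀‖ ^ p : ℝ) : EReal)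
        ≤ (((1:ℝ)/2 * θ z + (1 - 1/2 : ℝ) * a₀ : ℝ) : EReal) := by
      refine le_trans (add_le_add_left ?_ _) hpc
      rw [EReal.coe_add]
      exact hlow
    rw [← EReal.coe_add] at hchain
    have hreal : a₀ + 1/2 * ξ₀ (z - x₀) + c₀ * (1/2) * (1 - 1/2) * ‖z - x₀‖ ^ p
        ≤ 1/2 * θ z + (1 - 1/2) * a₀ := by exact_mod_cast hchain
    simp only [hDdef]
    nlinarith [hreal]
  -- the infimum
  set S : Set X := {z | Θ z ≠ ⊤ ∧ z ∈ DF ∧ F z = y} with hSdef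
  set V : Set ℝ := D '' S with hV
  have hVne : V.Nonempty := ⟨D xs, xs, ⟨hxsT, hxsDF, hxsF⟩, rfl⟩
  have hVbdd : BddBelow V := ⟨0, fun r ⟨z, hz, hr⟩ => hr ▸ hD0 z hz.1⟩
  set m : ℝ := sInf V with hm
  have hm_le : ∀ z, z ∈ S → m ≤ D z := fun z hz => csInf_le hVbdd ⟨z, hz, rfl⟩
  -- minimizing sequence
  have happrox : ∀ n : ℕ, ∃ z, z ∈ S ∧ D z < m + 1/(n+1) := by
    intro n
    have h1 : m < m + 1/(n+1) := by
      have : (0:ℝ) < 1/(n+1) := by positivity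
      linarith
    obtain ⟨r, ⟨z, hz, rfl⟩, hr⟩ := exists_lt_of_csInf_lt hVne h1
    exact ⟨z, hz, hr⟩
  choose w hwS hwD using happrox
  -- boundedness of the minimizing sequence
  set A : ℝ := (m + 1) * 2 / c₀ with hA
  set B : ℝ := ‖x₀‖ + max 1 A with hB
  have hwB : ∀ n, ‖w n‖ ≤ B := by
    intro n
    have h1 : D (w n) < m + 1 := by
      have hh : 1/((n:ℝ)+1) ≤ 1 := by
        rw [div_le_one (by positivity)]
        linarith [Nat.cast_nonneg (α := ℝ) n]
      have h0 := hwD n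
      linarith
    have h2 := hcoer (w n) (hwS n).1
    have h3 : ‖w n - x₀‖ ^ p ≤ A := by
      rw [hA, le_div_iff₀ hc₀]
      nlinarith
    have h4 : ‖w n - x₀‖ ≤ max 1 A := by
      rcases le_or_gt ‖w n - x₀‖ 1 with h | h
      · exact le_trans h (le_max_left _ _)
      · refine le_trans ?_ (le_max_right _ _)
        calc ‖w n - x₀‖ = ‖w n - x₀‖ ^ (1:ℝ) := (Real.rpow_one _).symm
        _ ≤ ‖w n - x₀‖ ^ p := Real.rpow_le_rpow_of_exponent_le h.le (by linarith)
        _ ≤ A := h3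
    have hrw : w n - x₀ + x₀ = w n := by abel
    have h5 : ‖w n‖ ≤ ‖w n - x₀‖ + ‖x₀‖ := by
      have h6 := norm_add_le (w n - x₀) x₀
      rwa [hrw] at h6
    rw [hB]
    linarith
  -- extract a weakly convergent subsequence
  obtain ⟨x, φ, hφ, hweak⟩ := aux_weak_seq_compact hrefl w B hwB
  -- weak closedness of F
  obtain ⟨hxDF, hxF⟩ := hweakclosed (fun n => w (φ n)) x y
    (fun n => (hwS (φ n)).2.1) hweak
    (by
      have : (fun n => F (w (φ n))) = fun _ => y := funext fun n => (hwS (φ n)).2.2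
      rw [this]
      exact tendsto_const_nhds)
  -- convergence of the values
  have hDconv : Tendsto (fun n => D (w (φ n))) atTop (𝓝 m) := by
    have hup : Tendsto (fun n : ℕ => m + 1/((n:ℝ)+1)) atTop (𝓝 m) := by
      have := tendsto_one_div_add_atTop_nhds_zero_nat (𝕜 := ℝ)
      have h2 := tendsto_const_nhds (α := ℕ) (f := atTop) (x := m) |>.add this
      simpa using h2
    refine tendsto_of_tendsto_of_tendsto_of_le_of_le tendsto_const_nhds hup ?_ ?_
    · exact fun n => hm_le _ (hwS (φ n))
    · intro n
      have h1 := (hwD (φ n)).le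
      have h2 : 1/((φ n : ℝ)+1) ≤ 1/((n:ℝ)+1) := by
        apply one_div_le_one_div_of_le (by positivity)
        have hn' : (n:ℝ) ≤ (φ n : ℝ) := Nat.cast_le.mpr hφ.le_apply
        linarith
      linarith
  -- the epigraph-type set
  set Epi : Set (X × ℝ) :=
    {q | Θ q.1 ≤ ((q.2 + a₀ + ξ₀ (q.1 - x₀) : ℝ) : EReal)} with hEpi
  have hconvE : Convex ℝ Epi := by
    rintro q₁ hq₁ q₂ hq₂ a b ha hb hab
    have hb' : b = 1 - a := by linarith
    subst hb'
    rw [hEpi, Set.mem_setOf_eq] at hq₁ hq₂ ⊢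
    have h1T : Θ q₁.1 ≠ ⊤ := ne_top_of_le_ne_top (EReal.coe_ne_top _) hq₁
    have h2T : Θ q₂.1 ≠ ⊤ := ne_top_of_le_ne_top (EReal.coe_ne_top _) hq₂
    rw [hθ _ h1T, EReal.coe_le_coe_iff] at hq₁
    rw [hθ _ h2T, EReal.coe_le_coe_iff] at hq₂
    have hpc := hpconv q₁.1 q₂.1 (1 - a) (by linarith) (by linarith)
    have e1 : (1 - (1 - a) : ℝ) = a := by ring
    rw [e1] at hpc
    have e2 : (1 - a) • q₂.1 + a • q₁.1 = a • q₁.1 + (1 - a) • q₂.1 := add_comm _ _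
    rw [e2] at hpc
    have hnn : (0:ℝ) ≤ c₀ * (1 - a) * a * ‖q₂.1 - q₁.1‖ ^ p := by
      have hrp := Real.rpow_nonneg (norm_nonneg (q₂.1 - q₁.1)) p
      have h1a : (0:ℝ) ≤ 1 - a := by linarith
      positivity
    have hge : Θ (a • q₁.1 + (1 - a) • q₂.1)
        ≤ ((1 - a : ℝ) : EReal) * Θ q₂.1 + (a : EReal) * Θ q₁.1 := by
      refine le_trans ?_ hpc
      refine le_add_of_nonneg_right ?_
      exact_mod_cast hnn
    rw [hθ _ h1T, hθ _ h2T, ← EReal.coe_mul, ← EReal.coe_mul, ← EReal.coe_add] at hge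
    simp only [Prod.fst_add, Prod.smul_fst, Prod.snd_add, Prod.smul_snd, smul_eq_mul]
    refine le_trans hge ?_
    rw [EReal.coe_le_coe_iff]
    simp only [map_sub, map_add, map_smul, smul_eq_mul] at hq₁ hq₂ ⊢
    nlinarith [mul_le_mul_of_nonneg_left hq₁ ha,
      mul_le_mul_of_nonneg_left hq₂ (by linarith : (0:ℝ) ≤ 1 - a)]
  have hclosedE : IsClosed Epi := by
    rw [← isOpen_compl_iff, isOpen_iff_mem_nhds]
    intro q hq
    rw [hEpi] at hq
    simp only [Set.mem_compl_iff, Set.mem_setOf_eq, not_le] at hq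
    obtain ⟨r, hr1, hr2⟩ := EReal.exists_between_coe_real hq
    have hg : Continuous (fun q' : X × ℝ => q'.2 + a₀ + ξ₀ (q'.1 - x₀)) := by
      exact (continuous_snd.add continuous_const).add
        (ξ₀.continuous.comp (continuous_fst.sub continuous_const))
    have hr1' : q.2 + a₀ + ξ₀ (q.1 - x₀) < r := by exact_mod_cast hr1
    have hev1 : ∀ᶠ q' : X × ℝ in 𝓝 q, q'.2 + a₀ + ξ₀ (q'.1 - x₀) < r :=
      hg.continuousAt.eventually_lt continuousAt_const hr1'
    have hev2 : ∀ᶠ q' : X × ℝ in 𝓝 q, (r : EReal) < Θ q'.1 :=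
      (continuous_fst.tendsto q).eventually (hlsc q.1 (r : EReal) hr2)
    filter_upwards [hev1, hev2] with q' h1 h2
    rw [Set.mem_compl_iff, hEpi]
    simp only [Set.mem_setOf_eq, not_le]
    refine lt_trans ?_ h2
    exact_mod_cast h1
  have hqn : ∀ n, (w (φ n), D (w (φ n))) ∈ Epi := by
    intro n
    rw [hEpi]
    simp only [Set.mem_setOf_eq]
    rw [hθ _ (hwS (φ n)).1]
    rw [EReal.coe_le_coe_iff]
    simp only [hDdef]
    ring_nf
    exact le_refl _
  have hxEpi : (x, m) ∈ Epi := by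
    by_contra hxm
    obtain ⟨f, s, hfs, hsx⟩ := geometric_hahn_banach_closed_point hconvE hclosedE hxm
    set f₁ : StrongDual ℝ X := f.comp (ContinuousLinearMap.inl ℝ X ℝ) with hf₁
    set c : ℝ := f (0, 1) with hc
    have hsplit : ∀ q : X × ℝ, f q = f₁ q.1 + q.2 * c := by
      intro q
      have : (q.1, q.2) = (q.1, (0:ℝ)) + q.2 • ((0:X), (1:ℝ)) := by
        simp [Prod.ext_iff]
      calc f q = f (q.1, q.2) := by rfl
      _ = f ((q.1, (0:ℝ)) + q.2 • ((0:X), (1:ℝ))) := by rw [← this]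
      _ = f (q.1, (0:ℝ)) + q.2 * f (0, 1) := by
          rw [map_add, map_smul, smul_eq_mul]
      _ = f₁ q.1 + q.2 * c := by rfl
    have hlim : Tendsto (fun n => f (w (φ n), D (w (φ n)))) atTop (𝓝 (f (x, m))) := by
      rw [hsplit (x, m)]
      have h1 := hweak f₁
      have h2 := hDconv.mul_const c
      have := h1.add h2
      refine Tendsto.congr (fun n => ?_) this
      rw [hsplit]
    have hle : f (x, m) ≤ s :=
      le_of_tendsto hlim (Eventually.of_forall fun n => (hfs _ (hqn n)).le)
    linarith
  rw [hEpi] at hxEpi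
  simp only [Set.mem_setOf_eq] at hxEpi
  have hxT : Θ x ≠ ⊤ := ne_top_of_le_ne_top (EReal.coe_ne_top _) hxEpi
  have hxD : D x ≤ m := by
    rw [hθ x hxT, EReal.coe_le_coe_iff] at hxEpi
    simp only [hDdef]
    linarith
  refine ⟨x, ⟨hxT, hxDF, hxF⟩, fun z hzT hzDF hzF => ?_⟩
  have hmz : m ≤ D z := hm_le z ⟨hzT, hzDF, hzF⟩
  rw [hθ x hxT, hθ z hzT, hΘx₀]
  rw [← EReal.coe_sub, ← EReal.coe_sub, ← EReal.coe_sub, ← EReal.coe_sub]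
  rw [EReal.coe_le_coe_iff]
  simp only [hDdef] at hxD hmz
  linarith
end

section
/- Let X be a Banach space, Θ proper, lower semi-continuous and p-convex with constant c₀ > 0, and let (xₙ) ⊂ X, (ξₙ) ⊂ X* with ξₙ ∈ ∂Θ(xₙ). Suppose there are a point x̂ and a constant C > 0 such that Dₙ := D_{ξₙ}Θ(x̂, xₙ) is non-increasing and for all l < k the estimate D_{ξ_{n_l}}Θ(x_{n_k}, x_{n_l}) ≤ (1 + C)(D_{n_l} − D_{n_k}) holds along a subsequence (n_k). Then (x_{n_k}) is a Cauchy sequence in X. -/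
open NormedSpace

/-- Let `X` be a Banach space, `Θ` proper, lower semi-continuous and `p`-convex with
constant `c₀ > 0`, and `(xₙ) ⊂ X`, `(ξₙ) ⊂ X*` with `ξₙ ∈ ∂Θ(xₙ)`. If there are a
point `x̂` and a constant `C > 0` such that `Dₙ := D_{ξₙ}Θ(x̂, xₙ)` is non-increasing,
and along a subsequence `(n_k)` the estimate
`D_{ξ_{n_l}}Θ(x_{n_k}, x_{n_l}) ≤ (1 + C)(D_{n_l} - D_{n_k})` holds for all `l < k`,
then `(x_{n_k})` is a Cauchy sequence in `X`. -/
theorem bregman_cauchy_subsequence {X : Type*} [NormedAddCommGroup X] [NormedSpace ℝ X]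
    [CompleteSpace X]
    (Θ : X → EReal) (p c₀ : ℝ) (hp : 2 ≤ p) (hc₀ : 0 < c₀)
    (hproper : ∃ z, Θ z ≠ ⊤) (hbot : ∀ z, Θ z ≠ ⊥)
    (hlsc : LowerSemicontinuous Θ)
    (x : ℕ → X) (ξ : ℕ → StrongDual ℝ X)
    (hsub : ∀ n, ∀ z : X, Θ (x n) + ((ξ n (z - x n) : ℝ) : EReal) ≤ Θ z)
    (hpc : ∀ n, ∀ z : X, ((c₀ * ‖z - x n‖ ^ p : ℝ) : EReal)
      ≤ Θ z - Θ (x n) - ((ξ n (z - x n) : ℝ) : EReal))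
    (xhat : X) (hxhat : Θ xhat ≠ ⊤) (hxn : ∀ n, Θ (x n) ≠ ⊤)
    (C : ℝ) (hC : 0 < C)
    (D : ℕ → EReal)
    (hD : ∀ n, D n = Θ xhat - Θ (x n) - ((ξ n (xhat - x n) : ℝ) : EReal))
    (hmono : Antitone D)
    (nk : ℕ → ℕ) (hnk : StrictMono nk)
    (hest : ∀ l k : ℕ, l < k →
      Θ (x (nk k)) - Θ (x (nk l)) - ((ξ (nk l) (x (nk k) - x (nk l)) : ℝ) : EReal)
        ≤ ((1 + C : ℝ) : EReal) * (D (nk l) - D (nk k))) :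
    CauchySeq (fun k => x (nk k)) := by

  have hΘn : ∀ n, Θ (x n) = (((Θ (x n)).toReal : ℝ) : EReal) :=
    fun n => (EReal.coe_toReal (hxn n) (hbot _)).symm
  have hΘh : Θ xhat = (((Θ xhat).toReal : ℝ) : EReal) :=
    (EReal.coe_toReal hxhat (hbot _)).symm
  set A := (Θ xhat).toReal with hA
  set a : ℕ → ℝ := fun n => (Θ (x n)).toReal with ha
  set d : ℕ → ℝ := fun n => A - a n - ξ n (xhat - x n) with hd
  have hDd : ∀ n, D n = ((d n : ℝ) : EReal) := by
    intro n
    rw [hD n, hΘh, hΘn n, ← EReal.coe_sub, ← EReal.coe_sub]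
  have hpcR : ∀ n m, c₀ * ‖x m - x n‖ ^ p ≤ a m - a n - ξ n (x m - x n) := by
    intro n m
    have h := hpc n (x m)
    rw [hΘn m, hΘn n, ← EReal.coe_sub, ← EReal.coe_sub] at h
    exact_mod_cast h
  have hpcH : ∀ n, c₀ * ‖xhat - x n‖ ^ p ≤ d n := by
    intro n
    have h := hpc n xhat
    rw [hΘh, hΘn n, ← EReal.coe_sub, ← EReal.coe_sub] at h
    exact_mod_cast h
  have hd0 : ∀ n, 0 ≤ d n := fun n =>
    le_trans (mul_nonneg hc₀.le (Real.rpow_nonneg (norm_nonneg _) p)) (hpcH n)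
  have hestR : ∀ l k, l < k →
      a (nk k) - a (nk l) - ξ (nk l) (x (nk k) - x (nk l))
        ≤ (1 + C) * (d (nk l) - d (nk k)) := by
    intro l k hlk
    have h := hest l k hlk
    rw [hΘn (nk k), hΘn (nk l), ← EReal.coe_sub, ← EReal.coe_sub,
        hDd (nk l), hDd (nk k), ← EReal.coe_sub, ← EReal.coe_mul] at h
    exact_mod_cast h
  have hkey : ∀ l k, l < k →
      c₀ * ‖x (nk k) - x (nk l)‖ ^ p ≤ (1 + C) * (d (nk l) - d (nk k)) :=
    fun l k h => le_trans (hpcR (nk l) (nk k)) (hestR l k h)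
  have hanti : Antitone (fun k => d (nk k)) := by
    intro l k hlk
    have h := hmono (hnk.monotone hlk)
    rw [hDd, hDd] at h
    exact_mod_cast h
  have hbdd : BddBelow (Set.range fun k => d (nk k)) :=
    ⟨0, by rintro y ⟨k, rfl⟩; exact hd0 _⟩
  have hconv : CauchySeq (fun k => d (nk k)) :=
    (tendsto_atTop_ciInf hanti hbdd).cauchySeq
  rw [Metric.cauchySeq_iff]
  intro ε hε
  have hp0 : (0:ℝ) < p := by linarith
  have h1C : (0:ℝ) < 1 + C := by linarith
  have hδ : 0 < c₀ * ε ^ p / (1 + C) :=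
    div_pos (mul_pos hc₀ (Real.rpow_pos_of_pos hε p)) h1C
  obtain ⟨N, hN⟩ := Metric.cauchySeq_iff.mp hconv _ hδ
  have main : ∀ l k, N ≤ l → l < k → dist (x (nk k)) (x (nk l)) < ε := by
    intro l k hl hlk
    have h1 := hkey l k hlk
    have h2 : (1 + C) * (d (nk l) - d (nk k)) < (1 + C) * (c₀ * ε ^ p / (1 + C)) := by
      apply mul_lt_mul_of_pos_left _ h1C
      calc d (nk l) - d (nk k) ≤ |d (nk l) - d (nk k)| := le_abs_self _
        _ < _ := by
          have := hN l hl k (hl.trans hlk.le)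
          rwa [Real.dist_eq] at this
    have h2' : (1 + C) * (c₀ * ε ^ p / (1 + C)) = c₀ * ε ^ p := by
      field_simp
    rw [h2'] at h2
    have h3 : ‖x (nk k) - x (nk l)‖ ^ p < ε ^ p :=
      (mul_lt_mul_iff_right₀ hc₀).mp (lt_of_le_of_lt h1 h2)
    rw [dist_eq_norm]
    by_contra hcon
    push_neg at hcon
    exact absurd h3 (not_lt.mpr (Real.rpow_le_rpow hε.le hcon hp0.le))
  refine ⟨N, fun m hm n hn => ?_⟩
  rcases lt_trichotomy m n with h | h | h
  · rw [dist_comm]; exact main m n hm h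
  · simp [h, hε]
  · exact main n m hn h
end
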